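/- One-step interaction unitary expansion: Let V be an N × N complex matrix. For Δt > 0 define the 2N × 2N anti-Hermitian block matrix Ω := √Δt · [[0, −V†], [V, 0]] and U := exp(Ω). Then there exists a constant C > 0, depending only on ‖V‖ (operator norm), such that for all Δt ∈ (0,1] and all ψ ∈ ℂ^N: ‖ U (ψ ⊕ 0) − ( (I − (Δt/2) V† V) ψ ⊕ √Δt · V ψ ) ‖ ≤ C · Δt^{3/2} · ‖ψ‖, where ψ ⊕ 0 and the target vector are written in the 2×1 block decomposition ℂ^{2N} = ℂ^N ⊕ ℂ^N. -/

import Mathlib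

open Matrix
open scoped Matrix.Norms.L2Operator
open scoped Nat
set_option maxHeartbeats 1000000

/-- The Euclidean (ℓ²) norm of a finitely-indexed complex vector. -/
noncomputable def euclNorm {ι : Type*} [Fintype ι] (v : ι → ℂ) : ℝ :=
  ‖(WithLp.equiv 2 (ι → ℂ)).symm v‖

/-- The anti-Hermitian interaction generator `Ω := √Δt · [[0, −V†], [V, 0]]`. -/
noncomputable def interactionGen {N : ℕ} (V : Matrix (Fin N) (Fin N) ℂ) (Δt : ℝ) :
    Matrix (Fin N ⊕ Fin N) (Fin N ⊕ Fin N) ℂ :=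
  Matrix.fromBlocks 0 (-((Real.sqrt Δt : ℂ) • Vᴴ)) ((Real.sqrt Δt : ℂ) • V) 0

lemma exp_remainder {𝔸 : Type*} [NormedRing 𝔸] [NormedAlgebra ℂ 𝔸] [CompleteSpace 𝔸] (A : 𝔸) :
    ‖NormedSpace.exp A - (1 + A + (2:ℂ)⁻¹ • (A * A))‖ ≤ ‖A‖ ^ 3 * Real.exp ‖A‖ := by
  have hsum : Summable fun n : ℕ => (n !⁻¹ : ℂ) • A ^ n :=
    NormedSpace.expSeries_summable' (𝕂 := ℂ) A
  have hpart : ∑ i ∈ Finset.range 3, (i !⁻¹ : ℂ) • A ^ i = 1 + A + (2:ℂ)⁻¹ • (A * A) := by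
    simp [Finset.sum_range_succ, Nat.factorial, pow_succ]
  have key : NormedSpace.exp A - (1 + A + (2:ℂ)⁻¹ • (A * A)) =
      ∑' i : ℕ, ((i + 3)!⁻¹ : ℂ) • A ^ (i + 3) := by
    have h := Summable.sum_add_tsum_nat_add 3 hsum
    rw [NormedSpace.exp_eq_tsum ℂ]
    beta_reduce
    rw [← h, hpart]
    exact add_sub_cancel_left _ _
  have hnsum : Summable fun n : ℕ => ‖(n !⁻¹ : ℂ) • A ^ n‖ :=
    NormedSpace.norm_expSeries_summable' (𝕂 := ℂ) A
  have hnsum3 : Summable fun i : ℕ => ‖((i + 3)!⁻¹ : ℂ) • A ^ (i + 3)‖ :=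
    (summable_nat_add_iff 3).mpr hnsum
  have hgsum : Summable fun i : ℕ => ‖A‖ ^ 3 * (‖A‖ ^ i / i !) :=
    (Real.summable_pow_div_factorial ‖A‖).mul_left _
  have hb : ∀ i : ℕ, ‖((i + 3)!⁻¹ : ℂ) • A ^ (i + 3)‖ ≤ ‖A‖ ^ 3 * (‖A‖ ^ i / i !) := by
    intro i
    calc ‖((i + 3)!⁻¹ : ℂ) • A ^ (i + 3)‖ ≤ ‖((i + 3)!⁻¹ : ℂ)‖ * ‖A ^ (i + 3)‖ :=
          norm_smul_le _ _
      _ ≤ (((i + 3)! : ℝ))⁻¹ * (‖A‖ ^ (i + 3)) := by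
          have h1 : ‖((i + 3)!⁻¹ : ℂ)‖ = (((i + 3)! : ℝ))⁻¹ := by
            rw [norm_inv]
            norm_num
          rw [h1]
          gcongr
          exact norm_pow_le' A (by omega)
      _ ≤ ((i ! : ℝ))⁻¹ * (‖A‖ ^ (i + 3)) := by
          have h2 : ((i ! : ℝ)) ≤ (((i + 3)! : ℝ)) := by
            exact_mod_cast Nat.factorial_le (Nat.le_add_right i 3)
          gcongr
      _ = ‖A‖ ^ 3 * (‖A‖ ^ i / i !) := by
          rw [pow_add]; field_simp
  have hexp : ∑' i : ℕ, ‖A‖ ^ i / (i ! : ℝ) = Real.exp ‖A‖ := by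
    rw [Real.exp_eq_exp_ℝ, NormedSpace.exp_eq_tsum_div]
  calc ‖NormedSpace.exp A - (1 + A + (2:ℂ)⁻¹ • (A * A))‖
      = ‖∑' i : ℕ, ((i + 3)!⁻¹ : ℂ) • A ^ (i + 3)‖ := by rw [key]
    _ ≤ ∑' i : ℕ, ‖((i + 3)!⁻¹ : ℂ) • A ^ (i + 3)‖ := norm_tsum_le_tsum_norm hnsum3
    _ ≤ ∑' i : ℕ, ‖A‖ ^ 3 * (‖A‖ ^ i / i !) := Summable.tsum_le_tsum hb hnsum3 hgsum
    _ = ‖A‖ ^ 3 * Real.exp ‖A‖ := by rw [tsum_mul_left, hexp]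

lemma euclNorm_nonneg {ι : Type*} [Fintype ι] (v : ι → ℂ) : 0 ≤ euclNorm v :=
  norm_nonneg _

lemma euclNorm_mulVec_le {n : Type*} [Fintype n] [DecidableEq n] (A : Matrix n n ℂ)
    (v : n → ℂ) : euclNorm (A *ᵥ v) ≤ ‖A‖ * euclNorm v :=
  A.l2_opNorm_mulVec ((WithLp.equiv 2 (n → ℂ)).symm v)

lemma euclNorm_elim_zero {N : ℕ} (ψ : Fin N → ℂ) :
    euclNorm (Sum.elim ψ (0 : Fin N → ℂ)) = euclNorm ψ := by
  simp [euclNorm, EuclideanSpace.norm_eq, Fintype.sum_sum_type]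


/-- **One-step interaction unitary expansion.** For `U := exp(Ω)` with
`Ω = √Δt·[[0,−V†],[V,0]]`, there is a constant `C > 0` (depending only on `‖V‖`) such that
for all `Δt ∈ (0,1]` and all `ψ`,
`‖U(ψ ⊕ 0) − ((I − (Δt/2)V†V)ψ ⊕ √Δt·Vψ)‖ ≤ C·Δt^{3/2}·‖ψ‖`. -/
theorem interaction_unitary_expansion (N : ℕ) (V : Matrix (Fin N) (Fin N) ℂ) :
    ∃ C > 0, ∀ Δt : ℝ, 0 < Δt → Δt ≤ 1 → ∀ ψ : Fin N → ℂ,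
      euclNorm
        ((NormedSpace.exp (interactionGen V Δt)) *ᵥ Sum.elim ψ 0 -
          Sum.elim
            ((((1 : Matrix (Fin N) (Fin N) ℂ) - ((Δt / 2 : ℝ) : ℂ) • (Vᴴ * V))) *ᵥ ψ)
            (((Real.sqrt Δt : ℂ) • V) *ᵥ ψ)) ≤
        C * Δt ^ ((3 : ℝ) / 2) * euclNorm ψ := by
  set M0 : Matrix (Fin N ⊕ Fin N) (Fin N ⊕ Fin N) ℂ := fromBlocks 0 (-Vᴴ) V 0 with hM0
  refine ⟨(‖M0‖ + 1) ^ 3 * Real.exp (‖M0‖ + 1), by positivity, ?_⟩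
  intro Δt hΔt hΔt1 ψ
  set s := Real.sqrt Δt with hs
  have hs0 : 0 ≤ s := Real.sqrt_nonneg _
  have hs1 : s ≤ 1 := Real.sqrt_le_one.mpr hΔt1
  have hss : s * s = Δt := Real.mul_self_sqrt hΔt.le
  set M := interactionGen V Δt with hM
  have hMM0 : M = (s : ℂ) • M0 := by
    rw [hM, hM0, Matrix.fromBlocks_smul]
    unfold interactionGen
    simp [hs]
  have hnM : ‖M‖ = s * ‖M0‖ := by
    rw [hMM0, norm_smul, Complex.norm_real, Real.norm_of_nonneg hs0]
  have hMv : M *ᵥ Sum.elim ψ 0 = Sum.elim (0 : Fin N → ℂ) (((s:ℂ) • V) *ᵥ ψ) := by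
    rw [hM]
    unfold interactionGen
    rw [fromBlocks_mulVec]
    simp [hs]
  have hM2v : (M * M) *ᵥ Sum.elim ψ 0
      = Sum.elim (-((Δt : ℂ) • ((Vᴴ * V) *ᵥ ψ))) (0 : Fin N → ℂ) := by
    rw [← mulVec_mulVec, hMv, hM]
    unfold interactionGen
    rw [fromBlocks_mulVec]
    simp [hs, neg_mulVec, smul_mulVec, mulVec_smul, mulVec_mulVec, smul_smul,
      ← Complex.ofReal_mul, hss, Real.mul_self_sqrt hΔt.le]
  have hTv : ((1 : Matrix (Fin N ⊕ Fin N) (Fin N ⊕ Fin N) ℂ) + M + (2:ℂ)⁻¹ • (M * M)) *ᵥ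
      Sum.elim ψ 0 =
      Sum.elim ((((1 : Matrix (Fin N) (Fin N) ℂ) - ((Δt / 2 : ℝ) : ℂ) • (Vᴴ * V))) *ᵥ ψ)
        (((s : ℂ) • V) *ᵥ ψ) := by
    rw [add_mulVec, add_mulVec, one_mulVec, smul_mulVec, hM2v, hMv]
    funext i
    cases i with
    | inl i =>
        simp only [Pi.add_apply, Sum.elim_inl, Pi.zero_apply, Pi.smul_apply, Pi.neg_apply,
          sub_mulVec, one_mulVec, Pi.sub_apply, smul_mulVec, smul_eq_mul]
        push_cast
        ring
    | inr i =>
        simp only [Pi.add_apply, Sum.elim_inr, Pi.zero_apply, Pi.smul_apply, Pi.neg_apply,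
          smul_eq_mul]
        ring
  have key : NormedSpace.exp M *ᵥ Sum.elim ψ 0 -
      Sum.elim ((((1 : Matrix (Fin N) (Fin N) ℂ) - ((Δt / 2 : ℝ) : ℂ) • (Vᴴ * V))) *ᵥ ψ)
        (((s : ℂ) • V) *ᵥ ψ) =
      (NormedSpace.exp M - ((1 : Matrix (Fin N ⊕ Fin N) (Fin N ⊕ Fin N) ℂ) + M +
        (2:ℂ)⁻¹ • (M * M))) *ᵥ Sum.elim ψ 0 := by
    rw [← hTv, ← sub_mulVec]
  have hrem := exp_remainder M
  have hs3 : s ^ 3 = Δt ^ ((3:ℝ)/2) := by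
    rw [hs, Real.sqrt_eq_rpow, ← Real.rpow_natCast (Δt ^ ((1:ℝ)/2)) 3,
      ← Real.rpow_mul hΔt.le]
    norm_num
  calc euclNorm (NormedSpace.exp M *ᵥ Sum.elim ψ 0 -
      Sum.elim ((((1 : Matrix (Fin N) (Fin N) ℂ) - ((Δt / 2 : ℝ) : ℂ) • (Vᴴ * V))) *ᵥ ψ)
        (((s : ℂ) • V) *ᵥ ψ))
      = euclNorm ((NormedSpace.exp M - ((1 : Matrix (Fin N ⊕ Fin N) (Fin N ⊕ Fin N) ℂ) + M +
          (2:ℂ)⁻¹ • (M * M))) *ᵥ Sum.elim ψ 0) := by rw [key]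
    _ ≤ ‖NormedSpace.exp M - ((1 : Matrix (Fin N ⊕ Fin N) (Fin N ⊕ Fin N) ℂ) + M +
          (2:ℂ)⁻¹ • (M * M))‖ * euclNorm (Sum.elim ψ (0 : Fin N → ℂ)) :=
        euclNorm_mulVec_le _ _
    _ ≤ (‖M‖ ^ 3 * Real.exp ‖M‖) * euclNorm ψ := by
        rw [euclNorm_elim_zero]
        exact mul_le_mul_of_nonneg_right hrem (euclNorm_nonneg ψ)
    _ ≤ ((‖M0‖ + 1) ^ 3 * Real.exp (‖M0‖ + 1)) * Δt ^ ((3:ℝ)/2) * euclNorm ψ := by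
        have h1 : ‖M‖ ^ 3 = Δt ^ ((3:ℝ)/2) * ‖M0‖ ^ 3 := by
          rw [hnM, mul_pow, hs3]
        have h2 : Real.exp ‖M‖ ≤ Real.exp (‖M0‖ + 1) := by
          apply Real.exp_le_exp.mpr
          rw [hnM]
          nlinarith [norm_nonneg M0]
        have h3 : ‖M0‖ ^ 3 ≤ (‖M0‖ + 1) ^ 3 := by
          gcongr ; nlinarith [norm_nonneg M0]
        have hd32 : (0:ℝ) ≤ Δt ^ ((3:ℝ)/2) := Real.rpow_nonneg hΔt.le _
        have hmain : ‖M‖ ^ 3 * Real.exp ‖M‖ ≤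
            (‖M0‖ + 1) ^ 3 * Real.exp (‖M0‖ + 1) * Δt ^ ((3:ℝ)/2) := by
          rw [h1]
          calc Δt ^ ((3:ℝ)/2) * ‖M0‖ ^ 3 * Real.exp ‖M‖
              ≤ Δt ^ ((3:ℝ)/2) * ((‖M0‖ + 1) ^ 3 * Real.exp (‖M0‖ + 1)) := by
                rw [mul_assoc]
                refine mul_le_mul_of_nonneg_left ?_ hd32
                exact mul_le_mul h3 h2 (Real.exp_pos _).le (by positivity)
            _ = (‖M0‖ + 1) ^ 3 * Real.exp (‖M0‖ + 1) * Δt ^ ((3:ℝ)/2) := by ring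
        exact mul_le_mul_of_nonneg_right hmain (euclNorm_nonneg ψ)
    _ = (‖M0‖ + 1) ^ 3 * Real.exp (‖M0‖ + 1) * Δt ^ ((3:ℝ)/2) * euclNorm ψ := by ring
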